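/- Let f : 𝔻 → ℝ be continuous with ∫_{𝔻}|f| dι < ∞. Then for every z ∈ 𝔻, the normalized Berezin transforms converge pointwise: lim_{ν→∞, ν ∈ ℕ, ν ≥ 2} (ν−1)·(B_ν f)(z) = f(z). -/

import Mathlib

open MeasureTheory Complex Filter

/-- The open unit disk in `ℂ`. -/
def unitDisk : Set ℂ := {z : ℂ | ‖z‖ < 1}

/-- The `SU(1,1)`-invariant measure `ι` on the unit disk, `dι(z) = dA(z)/(π(1−|z|²)²)`. -/
noncomputable def iota : Measure ℂ :=
  (volume.restrict unitDisk).withDensity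
    (fun z => ENNReal.ofReal (1 / (Real.pi * (1 - ‖z‖ ^ 2) ^ 2)))

instance : SigmaFinite iota := SigmaFinite.withDensity_ofReal _

/-- The Berezin transform:
`(B_ν f)(z) = ∫_𝔻 ((1−|z|²)^ν (1−|x|²)^ν / |1−z·conj(x)|^{2ν}) f(x) dι(x)`. -/
noncomputable def berezin (ν : ℕ) (f : ℂ → ℝ) (z : ℂ) : ℝ :=
  ∫ x, ((1 - ‖z‖ ^ 2) ^ ν * (1 - ‖x‖ ^ 2) ^ ν /
      ‖1 - z * (starRingEnd ℂ) x‖ ^ (2 * ν)) * f x ∂iota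

open Set
open scoped ENNReal NNReal

-- basic facts
lemma unitDisk_eq : unitDisk = Metric.ball (0:ℂ) 1 := by
  ext w; simp [unitDisk, Metric.mem_ball, Complex.dist_eq]

lemma isOpen_unitDisk : IsOpen unitDisk := by
  rw [unitDisk_eq]; exact Metric.isOpen_ball

lemma measurableSet_unitDisk : MeasurableSet unitDisk := isOpen_unitDisk.measurableSet

/-- the real density -/
noncomputable def rho (x : ℂ) : ℝ := 1 / (Real.pi * (1 - ‖x‖ ^ 2) ^ 2)

lemma rho_nonneg (x : ℂ) : 0 ≤ rho x := by
  unfold rho; positivity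

lemma rho_pos {x : ℂ} (hx : x ∈ unitDisk) : 0 < rho x := by
  have : ‖x‖ ^ 2 < 1 := by
    have h := hx; simp only [unitDisk, Set.mem_setOf_eq] at h
    nlinarith [norm_nonneg x]
  unfold rho
  have : 0 < 1 - ‖x‖ ^ 2 := by linarith
  positivity

lemma measurable_rho : Measurable rho := by
  unfold rho
  have h : Continuous fun x : ℂ => Real.pi * (1 - ‖x‖ ^ 2) ^ 2 := by continuity
  exact measurable_const.div h.measurable

lemma iota_eq : iota = (volume.restrict unitDisk).withDensity (fun x => ENNReal.ofReal (rho x)) := rfl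

lemma integral_iota (g : ℂ → ℝ) :
    ∫ x, g x ∂iota = ∫ x in unitDisk, rho x * g x := by
  rw [iota_eq]
  have hm : Measurable (fun x => (rho x).toNNReal) := measurable_rho.real_toNNReal
  have : (fun x => ENNReal.ofReal (rho x)) = (fun x => ((rho x).toNNReal : ℝ≥0∞)) := rfl
  rw [this, integral_withDensity_eq_integral_smul hm]
  congr 1
  ext x
  simp [NNReal.smul_def, Real.coe_toNNReal _ (rho_nonneg x), smul_eq_mul]

lemma ae_iota_mem : ∀ᵐ x ∂iota, x ∈ unitDisk := by
  have h : ∀ᵐ x ∂(volume.restrict unitDisk), x ∈ unitDisk :=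
    ae_restrict_mem measurableSet_unitDisk
  exact (withDensity_absolutelyContinuous _ _).ae_le h


noncomputable def moeb (z w : ℂ) : ℂ := (z - w) / (1 - (starRingEnd ℂ) z * w)

section moebius
variable {z w : ℂ}

lemma normSq_key (z w : ℂ) :
    Complex.normSq (1 - (starRingEnd ℂ) z * w) - Complex.normSq (z - w)
      = (1 - Complex.normSq z) * (1 - Complex.normSq w) := by
  simp only [Complex.normSq_apply, Complex.sub_re, Complex.sub_im, Complex.mul_re, Complex.mul_im,
    Complex.one_re, Complex.one_im, Complex.conj_re, Complex.conj_im]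
  ring

lemma den_ne_zero (hz : ‖z‖ < 1) (hw : ‖w‖ < 1) :
    1 - (starRingEnd ℂ) z * w ≠ 0 := by
  intro h
  have h1 : ‖(starRingEnd ℂ) z * w‖ < 1 := by
    rw [norm_mul, Complex.norm_conj]
    nlinarith [norm_nonneg z, norm_nonneg w]
  have h2 : (starRingEnd ℂ) z * w = 1 := by
    have := sub_eq_zero.mp h; exact this.symm
  rw [h2] at h1; simp at h1

lemma one_sub_abs_sq_moeb (hz : ‖z‖ < 1) (hw : ‖w‖ < 1) :
    1 - ‖moeb z w‖ ^ 2
      = (1 - ‖z‖ ^ 2) * (1 - ‖w‖ ^ 2)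
        / ‖1 - (starRingEnd ℂ) z * w‖ ^ 2 := by
  have hden := den_ne_zero hz hw
  have hdenpos : 0 < ‖1 - (starRingEnd ℂ) z * w‖ ^ 2 := by
    have := norm_pos_iff.mpr hden; positivity
  rw [moeb, norm_div, div_pow, eq_div_iff hdenpos.ne']
  simp only [Complex.sq_norm]
  rw [sub_mul, div_mul_cancel₀]
  · have := normSq_key z w; simp only [Complex.sq_norm] at *; linarith
  · exact fun h => hden (Complex.normSq_eq_zero.mp h)

lemma abs_moeb_lt_one (hz : ‖z‖ < 1) (hw : ‖w‖ < 1) :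
    ‖moeb z w‖ < 1 := by
  have h := one_sub_abs_sq_moeb hz hw
  have hdenpos : 0 < ‖1 - (starRingEnd ℂ) z * w‖ ^ 2 := by
    have := norm_pos_iff.mpr (den_ne_zero hz hw); positivity
  have h1 : 0 < 1 - ‖z‖ ^ 2 := by nlinarith [norm_nonneg z]
  have h2 : 0 < 1 - ‖w‖ ^ 2 := by nlinarith [norm_nonneg w]
  have : 0 < 1 - ‖moeb z w‖ ^ 2 := by rw [h]; positivity
  nlinarith [norm_nonneg (moeb z w)]

lemma den_moeb (hz : ‖z‖ < 1) (hw : ‖w‖ < 1) :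
    1 - (starRingEnd ℂ) z * moeb z w = (1 - (starRingEnd ℂ) z * z) / (1 - (starRingEnd ℂ) z * w) := by
  have hden := den_ne_zero hz hw
  rw [moeb]
  field_simp
  ring

lemma moeb_involution (hz : ‖z‖ < 1) (hw : ‖w‖ < 1) :
    moeb z (moeb z w) = w := by
  have hden := den_ne_zero hz hw
  have hzz : (1 : ℂ) - (starRingEnd ℂ) z * z ≠ 0 := by
    have : (starRingEnd ℂ) z * z = (Complex.normSq z : ℂ) := by
      rw [mul_comm, Complex.mul_conj]
    rw [this]
    intro h
    have : (Complex.normSq z : ℂ) = 1 := by linear_combination -h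
    have h2 : Complex.normSq z = 1 := by exact_mod_cast this
    have : ‖z‖ ^ 2 < 1 := by nlinarith [norm_nonneg z]
    rw [Complex.sq_norm] at this; linarith
  have hd2 : 1 - (starRingEnd ℂ) z * moeb z w ≠ 0 := by
    rw [den_moeb hz hw]
    exact div_ne_zero hzz hden
  rw [moeb, den_moeb hz hw, moeb, div_eq_iff (div_ne_zero hzz hden), mul_div_assoc', eq_div_iff hden,
    sub_mul, div_mul_cancel₀ _ hden]
  ring

end moebius


noncomputable def moebDeriv (z w : ℂ) : ℂ :=
  ((starRingEnd ℂ) z * z - 1) / (1 - (starRingEnd ℂ) z * w) ^ 2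

lemma hasDerivAt_moeb (z : ℂ) {w : ℂ} (hden : 1 - (starRingEnd ℂ) z * w ≠ 0) :
    HasDerivAt (moeb z) (moebDeriv z w) w := by
  have h1 : HasDerivAt (fun w : ℂ => z - w) (-1) w := by
    simpa using ((hasDerivAt_id w).const_sub z)
  have h2 : HasDerivAt (fun w : ℂ => 1 - (starRingEnd ℂ) z * w) (-(starRingEnd ℂ) z) w := by
    simpa using (((hasDerivAt_id w).const_mul ((starRingEnd ℂ) z)).const_sub 1)
  have h : HasDerivAt (moeb z) _ w := h1.div h2 hden
  convert h using 1
  rw [moebDeriv]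
  field_simp
  ring

/-- determinant of the ℝ-linear map "multiplication by c" on ℂ. -/
lemma det_restrictScalars_smulRight (c : ℂ) :
    (((1 : ℂ →L[ℂ] ℂ).smulRight c).restrictScalars ℝ).det = Complex.normSq c := by
  have h : ((((1 : ℂ →L[ℂ] ℂ).smulRight c).restrictScalars ℝ : ℂ →L[ℝ] ℂ) : ℂ →ₗ[ℝ] ℂ)
      = Algebra.lmul ℝ ℂ c := by
    ext x
    simp [mul_comm]
  rw [ContinuousLinearMap.det, h, ← Algebra.norm_apply, Algebra.norm_complex_apply]


section cov
variable {z w : ℂ}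

lemma mem_unitDisk {w : ℂ} : w ∈ unitDisk ↔ ‖w‖ < 1 := Iff.rfl

lemma moeb_image (hz : ‖z‖ < 1) : moeb z '' unitDisk = unitDisk := by
  apply Set.Subset.antisymm
  · rintro x ⟨w, hw, rfl⟩
    exact abs_moeb_lt_one hz hw
  · intro x hx
    exact ⟨moeb z x, abs_moeb_lt_one hz hx, moeb_involution hz hx⟩

lemma moeb_injOn (hz : ‖z‖ < 1) : Set.InjOn (moeb z) unitDisk := by
  intro a ha b hb h
  have := congrArg (moeb z) h
  rwa [moeb_involution hz ha, moeb_involution hz hb] at this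

lemma hasFDerivWithinAt_moeb (hz : ‖z‖ < 1) (hw : w ∈ unitDisk) :
    HasFDerivWithinAt (moeb z)
      (((1 : ℂ →L[ℂ] ℂ).smulRight (moebDeriv z w)).restrictScalars ℝ) unitDisk w :=
  (((hasDerivAt_moeb z (den_ne_zero hz hw)).hasFDerivAt).restrictScalars ℝ).hasFDerivWithinAt

lemma normSq_moebDeriv (hz : ‖z‖ < 1) (hw : ‖w‖ < 1) :
    Complex.normSq (moebDeriv z w)
      = (1 - ‖z‖ ^ 2) ^ 2 / (‖1 - (starRingEnd ℂ) z * w‖ ^ 2) ^ 2 := by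
  have h1 : (starRingEnd ℂ) z * z - 1 = ((Complex.normSq z - 1 : ℝ) : ℂ) := by
    rw [mul_comm, Complex.mul_conj]; push_cast; ring
  rw [moebDeriv, map_div₀, map_pow, h1, Complex.normSq_ofReal,
    ← Complex.sq_norm z, ← Complex.sq_norm (1 - (starRingEnd ℂ) z * w)]
  ring_nf

lemma density_identity (hz : ‖z‖ < 1) (hw : ‖w‖ < 1) :
    Complex.normSq (moebDeriv z w) * rho (moeb z w) = rho w := by
  have hA : (0:ℝ) < 1 - ‖z‖ ^ 2 := by nlinarith [norm_nonneg z]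
  have hB : (0:ℝ) < 1 - ‖w‖ ^ 2 := by nlinarith [norm_nonneg w]
  have hD : (0:ℝ) < ‖1 - (starRingEnd ℂ) z * w‖ ^ 2 := by
    have := norm_pos_iff.mpr (den_ne_zero hz hw); positivity
  have hD' : ‖1 - (starRingEnd ℂ) z * w‖ ≠ 0 := norm_ne_zero_iff.mpr (den_ne_zero hz hw)
  rw [normSq_moebDeriv hz hw, rho, rho, one_sub_abs_sq_moeb hz hw]
  field_simp
end cov


section covmain
variable {z : ℂ}

lemma setIntegral_moeb (hz : ‖z‖ < 1) (G : ℂ → ℝ) :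
    ∫ x in unitDisk, G x = ∫ w in unitDisk, Complex.normSq (moebDeriv z w) • G (moeb z w) := by
  conv_lhs => rw [← moeb_image hz]
  rw [integral_image_eq_integral_abs_det_fderiv_smul volume measurableSet_unitDisk
    (fun w hw => hasFDerivWithinAt_moeb hz hw) (moeb_injOn hz) G]
  refine setIntegral_congr_fun measurableSet_unitDisk (fun w hw => ?_)
  rw [det_restrictScalars_smulRight, _root_.abs_of_nonneg (Complex.normSq_nonneg _)]

lemma integral_iota_moeb (hz : ‖z‖ < 1) (G : ℂ → ℝ) :
    ∫ x, G x ∂iota = ∫ w, G (moeb z w) ∂iota := by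
  rw [integral_iota, integral_iota, setIntegral_moeb hz (fun x => rho x * G x)]
  refine setIntegral_congr_fun measurableSet_unitDisk (fun w hw => ?_)
  simp only [smul_eq_mul, ← mul_assoc]
  rw [density_identity hz hw]

lemma integrable_iota_iff (g : ℂ → ℝ) :
    Integrable g iota ↔ IntegrableOn (fun x => rho x * g x) unitDisk volume := by
  have hm : AEMeasurable (fun x => (rho x).toNNReal) (volume.restrict unitDisk) :=
    (measurable_rho.real_toNNReal).aemeasurable
  have hiota : iota = (volume.restrict unitDisk).withDensity
      (fun x => ((rho x).toNNReal : ℝ≥0∞)) := by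
    simp only [iota, ENNReal.ofReal]; rfl
  rw [hiota, integrable_withDensity_iff_integrable_coe_smul₀ hm]
  unfold IntegrableOn
  constructor <;> intro h <;> refine h.congr (Filter.Eventually.of_forall (fun x => ?_)) <;>
    simp [NNReal.smul_def, Real.coe_toNNReal _ (rho_nonneg x), smul_eq_mul]

lemma integrable_iota_moeb (hz : ‖z‖ < 1) {g : ℂ → ℝ} (hg : Integrable g iota) :
    Integrable (fun w => g (moeb z w)) iota := by
  rw [integrable_iota_iff] at hg ⊢
  have h := (integrableOn_image_iff_integrableOn_abs_det_fderiv_smul volume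
    measurableSet_unitDisk (fun w hw => hasFDerivWithinAt_moeb hz hw) (moeb_injOn hz)
    (fun x => rho x * g x)).mp
  rw [moeb_image hz] at h
  refine (h hg).congr_fun (fun w hw => ?_) measurableSet_unitDisk
  beta_reduce
  rw [det_restrictScalars_smulRight, _root_.abs_of_nonneg (Complex.normSq_nonneg _)]
  simp only [smul_eq_mul, ← mul_assoc]
  rw [density_identity hz hw]
end covmain


lemma integral_rpow_one_sub_sq (n : ℕ) :
    ∫ r in (0:ℝ)..1, r * (1 - r ^ 2) ^ n = 1 / (2 * ((n:ℝ) + 1)) := by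
  have key : ∀ r ∈ Set.uIcc (0:ℝ) 1, HasDerivAt
      (fun r : ℝ => -(1 - r ^ 2) ^ (n + 1) / (2 * (n + 1)))
      (r * (1 - r ^ 2) ^ n) r := by
    intro r _
    have h1 : HasDerivAt (fun r : ℝ => 1 - r ^ 2) (-(2 * r)) r := by
      simpa using ((hasDerivAt_pow 2 r).const_sub 1)
    have h2 : HasDerivAt (fun r : ℝ => -(1 - r ^ 2) ^ (n + 1) / (2 * (n + 1))) _ r :=
      (h1.pow (n + 1)).neg.div_const (2 * (n + 1))
    convert h2 using 1
    have hne : (2 * ((n:ℝ) + 1)) ≠ 0 := by positivity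
    rw [Nat.add_sub_cancel, eq_div_iff hne]
    push_cast
    ring
  have hcont : IntervalIntegrable (fun r : ℝ => r * (1 - r ^ 2) ^ n) volume 0 1 := by
    apply Continuous.intervalIntegrable; continuity
  rw [intervalIntegral.integral_eq_sub_of_hasDerivAt key hcont]
  have hne : ((n:ℝ) + 1) ≠ 0 := by positivity
  norm_num
  field_simp

lemma volume_integral_one_sub_sq (n : ℕ) :
    ∫ x in unitDisk, (1 - ‖x‖ ^ 2) ^ n ∂(volume : Measure ℂ)
      = Real.pi / ((n:ℝ) + 1) := by
  have hind : ∀ x : ℂ, unitDisk.indicator (fun x => (1 - ‖x‖ ^ 2) ^ n) x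
      = (Set.Iio (1:ℝ)).indicator (fun r => (1 - r ^ 2) ^ n) ‖x‖ := by
    intro x
    by_cases hx : ‖x‖ < 1
    · have hx' : ‖x‖ ∈ Set.Iio (1:ℝ) := by simpa using hx
      rw [Set.indicator_of_mem (show x ∈ unitDisk from hx), Set.indicator_of_mem hx']
    · have hx' : ‖x‖ ∉ Set.Iio (1:ℝ) := by simpa using hx
      rw [Set.indicator_of_notMem (show x ∉ unitDisk from hx), Set.indicator_of_notMem hx']
  rw [← integral_indicator measurableSet_unitDisk]
  simp_rw [hind]
  rw [integral_fun_norm_addHaar (volume : Measure ℂ)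
    ((Set.Iio (1:ℝ)).indicator (fun r => (1 - r ^ 2) ^ n))]
  have hdim : Module.finrank ℝ ℂ = 2 := Complex.finrank_real_complex
  have hvol : (volume : Measure ℂ).real (Metric.ball 0 1) = Real.pi := by
    rw [measureReal_def, Complex.volume_ball]
    simp [ENNReal.toReal_mul]
  rw [hdim, hvol]
  have : ∫ y in Set.Ioi (0:ℝ), y ^ (2 - 1) • (Set.Iio (1:ℝ)).indicator
      (fun r => (1 - r ^ 2) ^ n) y = 1 / (2 * ((n:ℝ) + 1)) := by
    have h1 : ∀ y : ℝ, y ^ (2 - 1) • (Set.Iio (1:ℝ)).indicator (fun r => (1 - r ^ 2) ^ n) y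
        = (Set.Iio (1:ℝ)).indicator (fun r => r * (1 - r ^ 2) ^ n) y := by
      intro y
      by_cases hy : y ∈ Set.Iio (1:ℝ) <;> simp [hy]
    simp_rw [h1]
    rw [setIntegral_indicator measurableSet_Iio]
    have : Set.Ioi (0:ℝ) ∩ Set.Iio 1 = Set.Ioo 0 1 := by ext y; simp [and_comm]
    rw [this, ← MeasureTheory.integral_Ioc_eq_integral_Ioo,
      ← intervalIntegral.integral_of_le (by norm_num : (0:ℝ) ≤ 1)]
    exact integral_rpow_one_sub_sq n
  rw [this]
  simp only [smul_eq_mul, nsmul_eq_mul]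
  push_cast
  field_simp


lemma abs_sq_lt_one {w : ℂ} (hw : w ∈ unitDisk) : ‖w‖ ^ 2 < 1 := by
  have h : ‖w‖ < 1 := hw
  nlinarith [norm_nonneg w]

lemma rho_mul_pow {n : ℕ} (hn : 2 ≤ n) {w : ℂ} (hw : w ∈ unitDisk) :
    rho w * (1 - ‖w‖ ^ 2) ^ n = (1 / Real.pi) * (1 - ‖w‖ ^ 2) ^ (n - 2) := by
  have h1 : (0:ℝ) < 1 - ‖w‖ ^ 2 := by have := abs_sq_lt_one hw; linarith
  have h2 : (1 - ‖w‖ ^ 2) ^ n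
      = (1 - ‖w‖ ^ 2) ^ (n - 2) * (1 - ‖w‖ ^ 2) ^ 2 := by
    rw [← pow_add]; congr 1; omega
  rw [rho, h2]
  have hpi := Real.pi_pos
  field_simp

lemma mass_iota {n : ℕ} (hn : 2 ≤ n) :
    ∫ w, (1 - ‖w‖ ^ 2) ^ n ∂iota = 1 / ((n:ℝ) - 1) := by
  rw [integral_iota]
  rw [setIntegral_congr_fun measurableSet_unitDisk (fun w hw => rho_mul_pow hn hw)]
  rw [integral_const_mul, volume_integral_one_sub_sq (n - 2)]
  have h : ((n - 2 : ℕ) : ℝ) + 1 = (n:ℝ) - 1 := by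
    have : (2:ℕ) ≤ n := hn
    push_cast [Nat.cast_sub this]
    ring
  rw [h]
  have hpi := Real.pi_ne_zero
  field_simp

lemma volume_unitDisk_lt_top : volume unitDisk < ⊤ := by
  rw [unitDisk_eq, Complex.volume_ball]
  exact ENNReal.mul_lt_top (by simp) (by simp)

lemma integrable_pow_iota {n : ℕ} (hn : 2 ≤ n) :
    Integrable (fun w => (1 - ‖w‖ ^ 2) ^ n) iota := by
  rw [integrable_iota_iff]
  have hbd : IntegrableOn (fun _ : ℂ => 1 / Real.pi) unitDisk volume := by
    apply integrableOn_const
    exact volume_unitDisk_lt_top.ne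
    exact enorm_ne_top
  refine hbd.mono' ?_ ?_
  · exact ((measurable_rho.mul (by continuity : Continuous
      fun w : ℂ => (1 - ‖w‖ ^ 2) ^ n).measurable).aestronglyMeasurable)
  · refine (ae_restrict_mem measurableSet_unitDisk).mono (fun w hw => ?_)
    rw [rho_mul_pow hn hw]
    have h1 : (0:ℝ) < 1 - ‖w‖ ^ 2 := by have := abs_sq_lt_one hw; linarith
    have h2 : (1 - ‖w‖ ^ 2) ^ (n - 2) ≤ 1 := by
      apply pow_le_one₀ h1.le
      nlinarith [norm_nonneg w, norm_nonneg w]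
    have hpi := Real.pi_pos
    rw [Real.norm_eq_abs, _root_.abs_of_nonneg (by positivity)]
    rw [mul_comm]
    calc (1 - ‖w‖ ^ 2) ^ (n-2) * (1/Real.pi) ≤ 1 * (1/Real.pi) := by
          apply mul_le_mul_of_nonneg_right h2 (by positivity)
      _ = 1/Real.pi := one_mul _


section key0
variable {g : ℂ → ℝ}

lemma integrable_pow_mul_iota (hgi : Integrable g iota) (n : ℕ) :
    Integrable (fun w => (1 - ‖w‖ ^ 2) ^ n * g w) iota := by
  refine hgi.mono ?_ ?_
  · exact ((by continuity : Continuous fun w : ℂ => (1 - ‖w‖ ^ 2) ^ n)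
      |>.aestronglyMeasurable).mul hgi.1
  · refine ae_iota_mem.mono (fun w hw => ?_)
    rw [Real.norm_eq_abs, Real.norm_eq_abs, abs_mul]
    have h1 : (0:ℝ) < 1 - ‖w‖ ^ 2 := by have := abs_sq_lt_one hw; linarith
    have h2 : |(1 - ‖w‖ ^ 2) ^ n| ≤ 1 := by
      rw [_root_.abs_of_nonneg (by positivity)]
      apply pow_le_one₀ h1.le
      nlinarith [norm_nonneg w]
    nlinarith [abs_nonneg (g w), abs_nonneg ((1 - ‖w‖ ^ 2) ^ n)]

lemma key_estimate (hgi : Integrable g iota) {ε' δ : ℝ} (hε' : 0 < ε') (hδ : 0 < δ)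
    (hδ1 : δ < 1)
    (hg0 : ∀ w : ℂ, ‖w‖ < δ → |g w - g 0| ≤ ε')
    {ν : ℕ} (hν : 2 ≤ ν) :
    |((ν:ℝ) - 1) * ∫ w, (1 - ‖w‖ ^ 2) ^ ν * g w ∂iota - g 0|
      ≤ ε' + ((ν:ℝ) - 1) * (1 - δ ^ 2) ^ (ν - 2)
          * ∫ w, (1 - ‖w‖ ^ 2) ^ 2 * (|g w| + |g 0|) ∂iota := by
  set K : ℂ → ℝ := fun w => (1 - ‖w‖ ^ 2) ^ ν with hK
  set r : ℝ := 1 - δ ^ 2 with hr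
  have hν1 : (0:ℝ) < (ν:ℝ) - 1 := by
    have : (2:ℝ) ≤ (ν:ℝ) := by exact_mod_cast hν
    linarith
  have hr0 : 0 ≤ r := by nlinarith
  -- integrabilities
  have hint1 : Integrable (fun w => K w * g w) iota := integrable_pow_mul_iota hgi ν
  have hintK : Integrable K iota := integrable_pow_iota hν
  have hint2 : Integrable (fun w => K w * g 0) iota := hintK.mul_const _
  have hintC : Integrable (fun w => (1 - ‖w‖ ^ 2) ^ 2 * (|g w| + |g 0|)) iota := by
    have h1 : Integrable (fun w => (1 - ‖w‖ ^ 2) ^ 2 * |g w|) iota := by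
      have := integrable_pow_mul_iota hgi.abs 2
      simpa using this
    have h2 : Integrable (fun w => (1 - ‖w‖ ^ 2) ^ 2 * |g 0|) iota :=
      (integrable_pow_iota le_rfl).mul_const _
    refine (h1.add h2).congr (Filter.Eventually.of_forall (fun w => ?_))
    simp [mul_add]
  have hbound : Integrable
      (fun w => ε' * K w + r ^ (ν - 2) * ((1 - ‖w‖ ^ 2) ^ 2 * (|g w| + |g 0|))) iota :=
    (hintK.const_mul _).add (hintC.const_mul _)
  -- the mass identity
  have hmass : ∫ w, K w ∂iota = 1 / ((ν:ℝ) - 1) := mass_iota hν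
  have hsub : g 0 = ((ν:ℝ) - 1) * ∫ w, K w * g 0 ∂iota := by
    rw [integral_mul_const, hmass]
    field_simp
  -- rewrite difference
  have hsplit_int : ∫ w, K w * (g w - g 0) ∂iota
      = (∫ w, K w * g w ∂iota) - ∫ w, K w * g 0 ∂iota := by
    rw [← integral_sub hint1 hint2]
    congr 1; ext w; ring
  have hdiff : ((ν:ℝ) - 1) * (∫ w, K w * g w ∂iota) - g 0
      = ((ν:ℝ) - 1) * ∫ w, K w * (g w - g 0) ∂iota := by
    calc ((ν:ℝ) - 1) * (∫ w, K w * g w ∂iota) - g 0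
        = ((ν:ℝ) - 1) * (∫ w, K w * g w ∂iota)
            - ((ν:ℝ) - 1) * ∫ w, K w * g 0 ∂iota := by rw [← hsub]
      _ = _ := by rw [hsplit_int]; ring
  rw [hdiff, abs_mul, _root_.abs_of_pos hν1]
  have hint_sub : Integrable (fun w => K w * (g w - g 0)) iota := by
    have h := hint1.sub hint2
    refine h.congr (Filter.Eventually.of_forall (fun w => ?_))
    simp [mul_sub]
  -- pointwise bound
  have hptwise : ∀ᵐ w ∂iota, ‖K w * (g w - g 0)‖
      ≤ ε' * K w + r ^ (ν - 2) * ((1 - ‖w‖ ^ 2) ^ 2 * (|g w| + |g 0|)) := by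
    refine ae_iota_mem.mono (fun w hw => ?_)
    have h1 : (0:ℝ) < 1 - ‖w‖ ^ 2 := by have := abs_sq_lt_one hw; linarith
    have hKpos : 0 ≤ K w := by positivity
    rw [Real.norm_eq_abs, abs_mul, _root_.abs_of_nonneg hKpos]
    by_cases hcase : ‖w‖ < δ
    · have h2 : K w * |g w - g 0| ≤ K w * ε' := by
        apply mul_le_mul_of_nonneg_left (hg0 w hcase) hKpos
      have h3 : 0 ≤ r ^ (ν - 2) * ((1 - ‖w‖ ^ 2) ^ 2 * (|g w| + |g 0|)) := by
        positivity
      nlinarith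
    · push_neg at hcase
      have h2 : 1 - ‖w‖ ^ 2 ≤ r := by
        have : δ ^ 2 ≤ ‖w‖ ^ 2 := by
          apply pow_le_pow_left₀ hδ.le hcase
        rw [hr]; linarith
      have h3 : K w ≤ r ^ (ν - 2) * (1 - ‖w‖ ^ 2) ^ 2 := by
        have hsplit : K w = (1 - ‖w‖ ^ 2) ^ (ν - 2) * (1 - ‖w‖ ^ 2) ^ 2 := by
          have hnn : ν - 2 + 2 = ν := by omega
          rw [hK, ← pow_add, hnn]
        rw [hsplit]
        apply mul_le_mul_of_nonneg_right _ (by positivity)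
        exact pow_le_pow_left₀ h1.le h2 _
      have h4 : |g w - g 0| ≤ |g w| + |g 0| := abs_sub _ _
      have h5 : 0 ≤ ε' * K w := by positivity
      have h6 : K w * |g w - g 0| ≤ (r ^ (ν - 2) * (1 - ‖w‖ ^ 2) ^ 2) * (|g w| + |g 0|) := by
        apply mul_le_mul h3 h4 (abs_nonneg _) (by positivity)
      nlinarith
  have habs : |∫ w, K w * (g w - g 0) ∂iota|
      ≤ ∫ w, ε' * K w + r ^ (ν - 2) * ((1 - ‖w‖ ^ 2) ^ 2 * (|g w| + |g 0|)) ∂iota := by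
    calc |∫ w, K w * (g w - g 0) ∂iota| = ‖∫ w, K w * (g w - g 0) ∂iota‖ :=
          (Real.norm_eq_abs _).symm
      _ ≤ ∫ w, ‖K w * (g w - g 0)‖ ∂iota := norm_integral_le_integral_norm _
      _ ≤ _ := integral_mono_ae hint_sub.norm hbound hptwise
  have hsum : ∫ w, ε' * K w + r ^ (ν - 2) * ((1 - ‖w‖ ^ 2) ^ 2 * (|g w| + |g 0|)) ∂iota
      = ε' / ((ν:ℝ) - 1) + r ^ (ν - 2)
          * ∫ w, (1 - ‖w‖ ^ 2) ^ 2 * (|g w| + |g 0|) ∂iota := by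
    rw [integral_add (hintK.const_mul _) (hintC.const_mul _), integral_const_mul,
      integral_const_mul, hmass]
    ring
  calc ((ν:ℝ) - 1) * |∫ w, K w * (g w - g 0) ∂iota|
      ≤ ((ν:ℝ) - 1) * (ε' / ((ν:ℝ) - 1) + r ^ (ν - 2)
          * ∫ w, (1 - ‖w‖ ^ 2) ^ 2 * (|g w| + |g 0|) ∂iota) := by
        apply mul_le_mul_of_nonneg_left _ hν1.le
        rw [← hsum]; exact habs
    _ = ε' + ((ν:ℝ) - 1) * r ^ (ν - 2)
          * ∫ w, (1 - ‖w‖ ^ 2) ^ 2 * (|g w| + |g 0|) ∂iota := by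
        field_simp
end key0

lemma key0 (hg : ContinuousOn g unitDisk) (hgi : Integrable g iota) :
    Tendsto (fun ν : ℕ => ((ν:ℝ) - 1) * ∫ w, (1 - ‖w‖ ^ 2) ^ ν * g w ∂iota)
      atTop (nhds (g 0)) := by
  rw [Metric.tendsto_atTop]
  intro ε hε
  have h0 : (0:ℂ) ∈ unitDisk := by simp [unitDisk]
  have hc : ContinuousAt g 0 := hg.continuousAt (isOpen_unitDisk.mem_nhds h0)
  obtain ⟨δ₀, hδ₀, hδ₀'⟩ := Metric.continuousAt_iff.mp hc (ε/3) (by positivity)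
  set δ : ℝ := min δ₀ (1/2) with hδdef
  have hδpos : 0 < δ := lt_min hδ₀ (by norm_num)
  have hδ1 : δ < 1 := lt_of_le_of_lt (min_le_right _ _) (by norm_num)
  have hg0 : ∀ w : ℂ, ‖w‖ < δ → |g w - g 0| ≤ ε/3 := by
    intro w hw
    have : dist w 0 < δ₀ := by
      rw [Complex.dist_eq, sub_zero]
      exact lt_of_lt_of_le hw (min_le_left _ _)
    have := hδ₀' this
    rw [Real.dist_eq] at this
    exact this.le
  set C : ℝ := ∫ w, (1 - ‖w‖ ^ 2) ^ 2 * (|g w| + |g 0|) ∂iota with hCdef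
  have hC0 : 0 ≤ C := by
    apply integral_nonneg
    intro w
    positivity
  set r : ℝ := 1 - δ ^ 2 with hrdef
  have hr0 : 0 ≤ r := by nlinarith
  have hr1 : r < 1 := by nlinarith
  have htail : Tendsto (fun ν : ℕ => ((ν:ℝ) - 1) * r ^ (ν - 2) * C) atTop (nhds 0) := by
    have h1 : Tendsto (fun m : ℕ => (((m:ℝ) + 1) * r ^ m) * C) atTop (nhds 0) := by
      have ha := tendsto_self_mul_const_pow_of_lt_one hr0 hr1
      have hb := tendsto_pow_atTop_nhds_zero_of_lt_one hr0 hr1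
      have hab := (ha.add hb).mul_const C
      rw [add_zero, zero_mul] at hab
      refine hab.congr (fun m => ?_)
      ring
    rw [← tendsto_add_atTop_iff_nat 2]
    refine h1.congr (fun m => ?_)
    have h2 : m + 2 - 2 = m := by omega
    rw [h2]
    push_cast
    ring
  obtain ⟨N₀, hN₀⟩ := Metric.tendsto_atTop.mp htail (ε/3) (by positivity)
  refine ⟨max N₀ 2, fun ν hν => ?_⟩
  have hν2 : 2 ≤ ν := le_trans (le_max_right _ _) hν
  have hνN : N₀ ≤ ν := le_trans (le_max_left _ _) hν
  have hkey := key_estimate hgi (by positivity : (0:ℝ) < ε/3) hδpos hδ1 hg0 hν2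
  have htailb : ((ν:ℝ) - 1) * r ^ (ν - 2) * C < ε/3 := by
    have h := hN₀ ν hνN
    rw [Real.dist_eq, sub_zero] at h
    exact lt_of_le_of_lt (le_abs_self _) h
  rw [Real.dist_eq]
  rw [← hrdef, ← hCdef] at hkey
  linarith


section final
variable {z : ℂ} {f : ℂ → ℝ}

lemma abs_one_sub_conj (z x : ℂ) :
    ‖1 - z * (starRingEnd ℂ) x‖ = ‖1 - (starRingEnd ℂ) z * x‖ := by
  have h : (starRingEnd ℂ) (1 - (starRingEnd ℂ) z * x) = 1 - z * (starRingEnd ℂ) x := by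
    simp [map_sub, map_mul]
  rw [← h, Complex.norm_conj]

lemma kernel_eq (hz : ‖z‖ < 1) {x : ℂ} (hx : ‖x‖ < 1) (ν : ℕ) :
    (1 - ‖z‖ ^ 2) ^ ν * (1 - ‖x‖ ^ 2) ^ ν /
        ‖1 - z * (starRingEnd ℂ) x‖ ^ (2 * ν)
      = (1 - ‖moeb z x‖ ^ 2) ^ ν := by
  rw [one_sub_abs_sq_moeb hz hx, div_pow, abs_one_sub_conj, ← pow_mul, mul_pow]

lemma berezin_eq (hz : ‖z‖ < 1) (f : ℂ → ℝ) (ν : ℕ) :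
    berezin ν f z = ∫ w, (1 - ‖w‖ ^ 2) ^ ν * f (moeb z w) ∂iota := by
  have h1 : berezin ν f z = ∫ x, (1 - ‖moeb z x‖ ^ 2) ^ ν * f x ∂iota := by
    refine integral_congr_ae (ae_iota_mem.mono (fun x hx => ?_))
    simp only [kernel_eq hz hx ν]
  rw [h1, integral_iota_moeb hz (fun x => (1 - ‖moeb z x‖ ^ 2) ^ ν * f x)]
  refine integral_congr_ae (ae_iota_mem.mono (fun w hw => ?_))
  simp only [moeb_involution hz hw]

lemma continuousOn_moeb (hz : ‖z‖ < 1) : ContinuousOn (moeb z) unitDisk := by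
  apply ContinuousOn.div
  · exact (continuous_const.sub continuous_id).continuousOn
  · exact (continuous_const.sub (continuous_const.mul continuous_id)).continuousOn
  · exact fun w hw => den_ne_zero hz hw

theorem berezin_tendsto_pointwise (f : ℂ → ℝ) (hf_cont : ContinuousOn f unitDisk)
    (hf_int : Integrable f iota) (z : ℂ) (hz : z ∈ unitDisk) :
    Tendsto (fun ν : ℕ => ((ν : ℝ) - 1) * berezin ν f z) atTop (nhds (f z)) := by
  have hz' : ‖z‖ < 1 := hz
  set g : ℂ → ℝ := fun w => f (moeb z w) with hgdef
  have hgc : ContinuousOn g unitDisk := by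
    apply hf_cont.comp (continuousOn_moeb hz')
    exact fun w hw => abs_moeb_lt_one hz' hw
  have hgi : Integrable g iota := integrable_iota_moeb hz' hf_int
  have hg0 : g 0 = f z := by
    rw [hgdef]
    simp [moeb]
  have h := key0 hgc hgi
  rw [hg0] at h
  refine h.congr (fun ν => ?_)
  rw [berezin_eq hz' f ν]
end final
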